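/- Let 0 < m ≤ M. For the uniform model f_θ = θ^{-1} 1_{[0,θ]}, for all θ, θ' ∈ [m, M] one has (1/(2M)) |θ' - θ| ≤ h²(f_θ, f_{θ'}) ≤ (1/(2m)) |θ' - θ|. -/

import Mathlib

open MeasureTheory Real

noncomputable def hSq (f g : ℝ → ℝ) : ℝ :=
  (1/2) * ∫ x : ℝ, (Real.sqrt (f x) - Real.sqrt (g x))^2

noncomputable def unif (θ : ℝ) (x : ℝ) : ℝ :=
  if 0 ≤ x ∧ x ≤ θ then θ⁻¹ else 0

lemma hSq_comm (f g : ℝ → ℝ) : hSq f g = hSq g f := by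
  unfold hSq
  congr 1
  apply integral_congr_ae
  filter_upwards with x
  ring

lemma unif_integral (θ θ' : ℝ) (h0 : 0 < θ) (hle : θ ≤ θ') :
    ∫ x : ℝ, (Real.sqrt (unif θ x) - Real.sqrt (unif θ' x))^2
      = θ * (Real.sqrt θ⁻¹ - Real.sqrt θ'⁻¹)^2 + (θ' - θ) * θ'⁻¹ := by
  have h0' : 0 < θ' := h0.trans_le hle
  set a := (Real.sqrt θ⁻¹ - Real.sqrt θ'⁻¹)^2 with ha
  have hfun : ∀ x : ℝ, (Real.sqrt (unif θ x) - Real.sqrt (unif θ' x))^2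
      = (Set.Icc (0:ℝ) θ).indicator (fun _ => a) x
        + (Set.Ioc θ θ').indicator (fun _ => θ'⁻¹) x := by
    intro x
    simp only [Set.indicator, Set.mem_Icc, Set.mem_Ioc, unif]
    by_cases hx0 : 0 ≤ x
    · by_cases hx1 : x ≤ θ
      · have hx2 : x ≤ θ' := hx1.trans hle
        have hnlt : ¬ θ < x := not_lt.mpr hx1
        simp [hx0, hx1, hx2, hnlt, ha]
      · push_neg at hx1
        by_cases hx2 : x ≤ θ'
        · simp only [hx0, hx2, true_and, and_true, if_pos hx1, if_neg (not_le.mpr hx1),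
            if_pos (show θ < x ∧ x ≤ θ' from ⟨hx1, hx2⟩)]
          rw [Real.sqrt_zero, zero_sub, neg_sq, Real.sq_sqrt (by positivity), zero_add]
          simp
        · simp [hx0, hx2, not_le.mpr hx1]
    · have hxθ : ¬ θ < x := not_lt.mpr (le_of_lt ((not_le.mp hx0).trans h0))
      simp [hx0, hxθ]
  rw [show (fun x : ℝ => (Real.sqrt (unif θ x) - Real.sqrt (unif θ' x))^2)
      = fun x => (Set.Icc (0:ℝ) θ).indicator (fun _ => a) x
        + (Set.Ioc θ θ').indicator (fun _ => θ'⁻¹) x from funext hfun]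
  rw [integral_add ?_ ?_]
  · rw [integral_indicator_const _ measurableSet_Icc,
      integral_indicator_const _ measurableSet_Ioc,
      Real.volume_real_Icc_of_le h0.le, Real.volume_real_Ioc_of_le hle, sub_zero,
      smul_eq_mul, smul_eq_mul]
  · exact (integrable_indicator_iff measurableSet_Icc).mpr
      ((integrableOn_const_iff).mpr (Or.inr (by rw [Real.volume_Icc]; exact ENNReal.ofReal_lt_top)))
  · exact (integrable_indicator_iff measurableSet_Ioc).mpr
      ((integrableOn_const_iff).mpr (Or.inr (by rw [Real.volume_Ioc]; exact ENNReal.ofReal_lt_top)))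

lemma hSq_formula (θ θ' : ℝ) (h0 : 0 < θ) (hle : θ ≤ θ') :
    hSq (unif θ) (unif θ') = 1 - Real.sqrt θ / Real.sqrt θ' := by
  have h0' : 0 < θ' := h0.trans_le hle
  obtain ⟨s, hs0, rfl⟩ : ∃ s, 0 < s ∧ s^2 = θ :=
    ⟨Real.sqrt θ, Real.sqrt_pos.mpr h0, Real.sq_sqrt h0.le⟩
  obtain ⟨t, ht0, rfl⟩ : ∃ t, 0 < t ∧ t^2 = θ' :=
    ⟨Real.sqrt θ', Real.sqrt_pos.mpr h0', Real.sq_sqrt h0'.le⟩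
  rw [hSq, unif_integral _ _ h0 hle, Real.sqrt_inv, Real.sqrt_inv,
    Real.sqrt_sq hs0.le, Real.sqrt_sq ht0.le]
  have hst : s ≤ t := by nlinarith
  field_simp
  ring

theorem stmt3 (m M θ θ' : ℝ) (hm : 0 < m) (hmM : m ≤ M)
    (hθ : θ ∈ Set.Icc m M) (hθ' : θ' ∈ Set.Icc m M) :
    (1 / (2 * M)) * |θ' - θ| ≤ hSq (unif θ) (unif θ') ∧
      hSq (unif θ) (unif θ') ≤ (1 / (2 * m)) * |θ' - θ| := by
  obtain ⟨hθ1, hθ2⟩ := hθ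
  obtain ⟨hθ'1, hθ'2⟩ := hθ'
  have key : ∀ a b : ℝ, m ≤ a → a ≤ M → m ≤ b → b ≤ M → a ≤ b →
      (1 / (2 * M)) * (b - a) ≤ hSq (unif a) (unif b) ∧
        hSq (unif a) (unif b) ≤ (1 / (2 * m)) * (b - a) := by
    intro a b ha1 ha2 hb1 hb2 hab
    have ha0 : 0 < a := hm.trans_le ha1
    have hb0 : 0 < b := hm.trans_le hb1
    have hs : 0 < Real.sqrt a := Real.sqrt_pos.mpr ha0
    have ht : 0 < Real.sqrt b := Real.sqrt_pos.mpr hb0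
    have hst : Real.sqrt a ≤ Real.sqrt b := Real.sqrt_le_sqrt hab
    have ha : Real.sqrt a ^ 2 = a := Real.sq_sqrt ha0.le
    have hb : Real.sqrt b ^ 2 = b := Real.sq_sqrt hb0.le
    have hden : 0 < Real.sqrt b * (Real.sqrt b + Real.sqrt a) := by positivity
    have hform : hSq (unif a) (unif b)
        = (b - a) / (Real.sqrt b * (Real.sqrt b + Real.sqrt a)) := by
      rw [hSq_formula a b ha0 hab, eq_div_iff (ne_of_gt hden)]
      field_simp
      nlinarith [ha, hb]
    have hM : Real.sqrt b * (Real.sqrt b + Real.sqrt a) ≤ 2 * M := by nlinarith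
    have hmm : 2 * m ≤ Real.sqrt b * (Real.sqrt b + Real.sqrt a) := by nlinarith
    have hba : 0 ≤ b - a := by linarith
    constructor
    · rw [hform, one_div, inv_mul_eq_div]
      exact div_le_div_of_nonneg_left hba hden hM
    · rw [hform, one_div, inv_mul_eq_div]
      exact div_le_div_of_nonneg_left hba (by linarith) hmm
  rcases le_total θ θ' with h | h
  · have := key θ θ' hθ1 hθ2 hθ'1 hθ'2 h
    rwa [abs_of_nonneg (by linarith)]
  · have := key θ' θ hθ'1 hθ'2 hθ1 hθ2 h
    rw [abs_of_nonpos (by linarith), hSq_comm]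
    simpa using this
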